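/- Let n ≥ 1, let F : (Fin n → ℝ) × ℝ → ℝ be differentiable, let w : (Fin n → ℝ) × ℝ → (Fin n → ℝ) × ℝ be a vector field which is a symmetry of F, i.e. the directional derivative of F along w vanishes at every point: ⟪w(p), ∇F(p)⟫ = 0 for all p. Let h : (Fin n → ℝ) → ℝ be differentiable, and define the gauge-fixing function G(x, φ) = h(x) − φ. Assume that at every point of the constraint surface the symmetry direction is transverse to the gauge fixing: for all x, ⟪w(x, h(x)), ∇G(x, h(x))⟫ ≠ 0. Then for every x₀, x₀ is a critical point of the substituted (gauge-fixed) function x ↦ F(x, h(x)) (i.e. its Fréchet derivative at x₀ vanishes) if and only if ∇F(x₀, h(x₀)) = 0, i.e. (x₀, h(x₀)) is an unconstrained critical point of F with G(x₀, h(x₀)) = 0. -/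

import Mathlib

/-- Finite-dimensional core of the paper's theorem: let `F` be a differentiable
"action" on `(Fin n → ℝ) × ℝ` with a symmetry vector field `w` (the directional
derivative of `F` along `w`, i.e. `⟪w(p), ∇F(p)⟫`, vanishes everywhere), and let
`G(x, φ) = h(x) - φ` be a derivative-free gauge fixing whose gradient is nowhere
orthogonal to the symmetry direction on the constraint surface (i.e.
`⟪w(x, h(x)), ∇G(x, h(x))⟫ ≠ 0` for all `x`). Then `x₀` is a critical point of
the gauge-fixed (substituted) function `x ↦ F(x, h(x))` if and only if
`(x₀, h(x₀))` is an unconstrained critical point of `F` (i.e. `∇F(x₀, h(x₀)) = 0`,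
equivalently the Fréchet derivative of `F` vanishes there), a point which
automatically satisfies `G(x₀, h(x₀)) = 0`. -/
theorem gauge_fix_before_or_after_variation
    (n : ℕ) (hn : 1 ≤ n)
    (F : ((Fin n → ℝ) × ℝ) → ℝ) (hF : Differentiable ℝ F)
    (w : ((Fin n → ℝ) × ℝ) → ((Fin n → ℝ) × ℝ))
    (hsym : ∀ p, fderiv ℝ F p (w p) = 0)
    (h : (Fin n → ℝ) → ℝ) (hh : Differentiable ℝ h)
    (G : ((Fin n → ℝ) × ℝ) → ℝ) (hG : G = fun p => h p.1 - p.2)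
    (htrans : ∀ x : Fin n → ℝ, fderiv ℝ G (x, h x) (w (x, h x)) ≠ 0)
    (x₀ : Fin n → ℝ) :
    fderiv ℝ (fun x => F (x, h x)) x₀ = 0 ↔ fderiv ℝ F (x₀, h x₀) = 0 := by
  subst hG
  set p₀ : (Fin n → ℝ) × ℝ := (x₀, h x₀) with hp₀
  have hcomp : HasFDerivAt (fun x => F (x, h x))
      ((fderiv ℝ F p₀).comp
        ((ContinuousLinearMap.id ℝ (Fin n → ℝ)).prod (fderiv ℝ h x₀))) x₀ :=
    (hF p₀).hasFDerivAt.comp x₀ (HasFDerivAt.prodMk (hasFDerivAt_id x₀) (hh x₀).hasFDerivAt)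
  have hfd := hcomp.fderiv
  -- derivative of the gauge-fixing function
  have hGd : HasFDerivAt (fun p : (Fin n → ℝ) × ℝ => h p.1 - p.2)
      (((fderiv ℝ h x₀).comp (ContinuousLinearMap.fst ℝ (Fin n → ℝ) ℝ)) -
        ContinuousLinearMap.snd ℝ (Fin n → ℝ) ℝ) p₀ :=
    (((hh x₀).hasFDerivAt.comp p₀ hasFDerivAt_fst).sub hasFDerivAt_snd)
  have h2 : (w p₀).2 - fderiv ℝ h x₀ (w p₀).1 ≠ 0 := by
    have ht := htrans x₀
    rw [hGd.fderiv] at ht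
    intro hcontra
    apply ht
    show (fderiv ℝ h x₀) (w p₀).1 - (w p₀).2 = 0
    linarith [sub_eq_zero.mp hcontra]
  constructor
  · intro h0
    have hL : ∀ v, fderiv ℝ F p₀ (v, fderiv ℝ h x₀ v) = 0 := by
      intro v
      have := congrArg (fun (L : (Fin n → ℝ) →L[ℝ] ℝ) => L v) (hfd.symm.trans h0)
      simpa using this
    have hdec : ∀ (v : Fin n → ℝ) (t : ℝ),
        fderiv ℝ F p₀ (v, t) = (t - fderiv ℝ h x₀ v) * fderiv ℝ F p₀ (0, 1) := by
      intro v t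
      have hvt : (v, t) = (v, fderiv ℝ h x₀ v) +
          (t - fderiv ℝ h x₀ v) • (((0 : Fin n → ℝ), (1 : ℝ))) := by
        simp [Prod.ext_iff]
      rw [hvt, map_add, map_smul, hL]
      simp [smul_eq_mul]
    have hc : fderiv ℝ F p₀ (0, 1) = 0 := by
      have h1 := hsym p₀
      rw [show w p₀ = ((w p₀).1, (w p₀).2) from rfl, hdec] at h1
      exact (mul_eq_zero.mp h1).resolve_left h2
    apply ContinuousLinearMap.ext
    rintro ⟨v, t⟩
    rw [hdec, hc, mul_zero]
    rfl
  · intro h0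
    rw [hfd, h0]
    ext v
    simp
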